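/- (Relabel preserves validity.) Let x be a preflow, d a labeling valid with respect to x, and i a node with i ≠ t such that no arc out of i is admissible, i.e., d(i) ≤ d(j) for every node j with r_{ij}(x) > 0. Define d' by d'(i) = d(i) + 1 and d'(v) = d(v) for v ≠ i. Then d' is valid with respect to x. -/
import Mathlib


open Finset

variable {V : Type*}

/-- The excess of node `v` under `x`: total inflow minus total outflow. -/
def excess [Fintype V] (x : V → V → ℝ) (v : V) : ℝ :=
  (∑ j, x j v) - ∑ j, x v j

/-- `x` is capacity-feasible for capacities `u`: `0 ≤ x i j ≤ u i j` on distinct pairs. -/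
def IsCapFeasible (u x : V → V → ℝ) : Prop :=
  ∀ i j, i ≠ j → 0 ≤ x i j ∧ x i j ≤ u i j

/-- A preflow: capacity-feasible with nonnegative excess at every node other than `s`. -/
def IsPreflow [Fintype V] (u : V → V → ℝ) (s : V) (x : V → V → ℝ) : Prop :=
  IsCapFeasible u x ∧ ∀ v, v ≠ s → 0 ≤ excess x v

/-- A flow: capacity-feasible with zero excess at every node other than `s` and `t`. -/
def IsFlow [Fintype V] (u : V → V → ℝ) (s t : V) (x : V → V → ℝ) : Prop :=
  IsCapFeasible u x ∧ ∀ v, v ≠ s → v ≠ t → excess x v = 0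

/-- Residual capacity of the pair `(i,j)` with respect to `x`. -/
def res (u x : V → V → ℝ) (i j : V) : ℝ := u i j + x j i - x i j

/-- A labeling `d` is valid w.r.t. `x`: `d t = 0` and `d i ≤ d j + 1` across residual arcs. -/
def IsValidLabeling [Fintype V] (u x : V → V → ℝ) (t : V) (d : V → ℕ) : Prop :=
  d t = 0 ∧ ∀ i j, i ≠ j → 0 < res u x i j → d i ≤ d j + 1

/-- Relabeling a node `i ≠ t` with no admissible outgoing arc preserves validity
of the labeling. -/
theorem relabel_preserves_validity [Fintype V] (s t : V) (hst : s ≠ t)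
    (u : V → V → ℝ) (hu : ∀ i j, i ≠ j → 0 ≤ u i j)
    (x : V → V → ℝ) (hx : IsPreflow u s x)
    (d : V → ℕ) (hd : IsValidLabeling u x t d)
    (i : V) (hit : i ≠ t)
    (hnoadm : ∀ j : V, j ≠ i → 0 < res u x i j → d i ≤ d j)
    (d' : V → ℕ) (h'i : d' i = d i + 1) (h'other : ∀ v, v ≠ i → d' v = d v) :
    IsValidLabeling u x t d' := by
  obtain ⟨hdt, hdv⟩ := hd
  refine ⟨by rw [h'other t (Ne.symm hit), hdt], ?_⟩
  intro a b hab hr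
  by_cases ha : a = i
  · rw [ha, h'i]
    by_cases hb : b = i
    · rw [hb, h'i]; omega
    · rw [h'other b hb]
      have := hnoadm b hb (ha ▸ hr)
      omega
  · rw [h'other a ha]
    by_cases hb : b = i
    · rw [hb, h'i]
      have := hdv a b hab hr
      rw [hb] at this
      omega
    · rw [h'other b hb]
      exact hdv a b hab hr
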